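/- For any pair (a, x) of coprime integers with 1 ≤ a ≤ x, the polynomial (x, a)_q equals q^{deg (x,a)_q} · (a, x)_{q^{-1}}; that is, (x, a)_q is the reversed (reciprocal) polynomial of (a, x)_q. -/

import Mathlib

open Polynomial

/-- The `q`-integer `[c]_q = 1 + q + ⋯ + q^{c-1}` as a polynomial in `ℤ[q]`. -/
noncomputable def qInt (c : ℕ) : Polynomial ℤ := ∑ i ∈ Finset.range c, X ^ i

/-- The polynomial `(a, b)_q ∈ ℤ[q]` associated to a pair of coprime positive
integers: `(1, n)_q = (n, 1)_q = [n+1]_q`; if `a < b` then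
`(a,b)_q = (a-r, r)_q + q·(a, b-a)_q` with `r = b % a`; if `a > b` then
`(a,b)_q = (a-b, b)_q + q^⌈a/b⌉·(r, b-r)_q` with `r = a % b`.
(Values on non-coprime or zero inputs are junk.) -/
noncomputable def W : ℕ → ℕ → Polynomial ℤ
  | 1, b => qInt (b + 1)
  | a, 1 => qInt (a + 1)
  | 0, _ => 0
  | _, 0 => 0
  | a + 2, b + 2 =>
    if a < b then
      W (a + 2 - (b + 2) % (a + 2)) ((b + 2) % (a + 2)) + X * W (a + 2) (b - a)
    else
      W (a - b) (b + 2) +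
        X ^ ((a + 2 + (b + 2) - 1) / (b + 2)) *
          W ((a + 2) % (b + 2)) (b + 2 - (a + 2) % (b + 2))
  termination_by a b => a + b
  decreasing_by
  · have := Nat.mod_lt (b + 2) (show 0 < a + 2 by omega); omega
  · omega
  · omega
  · have := Nat.mod_lt (a + 2) (show 0 < b + 2 by omega); omega

/-- The sequence of digits of the negative continued fraction expansion
`x/a = [c₁, …, c_l]⁻` (each `cᵢ = ⌈·⌉` of the current fraction). By convention
`ncfDigits x 0 = []` (for `1/0 = ∞`) and `ncfDigits x 1 = [x]`. -/
def ncfDigits : ℕ → ℕ → List ℕ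
  | _, 0 => []
  | x, 1 => [x]
  | x, a + 2 =>
      (x + (a + 2) - 1) / (a + 2) ::
        ncfDigits (a + 2) ((x + (a + 2) - 1) / (a + 2) * (a + 2) - x)
  termination_by x a => a
  decreasing_by
    have := Nat.div_mul_le_self (x + (a + 2) - 1) (a + 2); omega

/-- The (coprime) numerator and denominator of the Morier-Genoud–Ovsienko
`q`-deformation of the negative continued fraction `[c₁, …, c_l]⁻`, computed by
the continuant recursion `(N, D) ↦ ([c]_q·N - q^{c-1}·D, N)`, with `(1, 0)` for
the empty list. -/
noncomputable def qCF : List ℕ → Polynomial ℤ × Polynomial ℤ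
  | [] => (1, 0)
  | c :: rest =>
      let p := qCF rest
      (qInt c * p.1 - X ^ (c - 1) * p.2, p.1)

/-- Numerator `N_q(x/a)` of the Morier-Genoud–Ovsienko `q`-rational `[x/a]_q`. -/
noncomputable def Nq (x a : ℕ) : Polynomial ℤ := (qCF (ncfDigits x a)).1

/-- Denominator `D_q(x/a)` of the Morier-Genoud–Ovsienko `q`-rational `[x/a]_q`. -/
noncomputable def Dq (x a : ℕ) : Polynomial ℤ := (qCF (ncfDigits x a)).2

/-- The normalized Jones polynomial `J_{x/a}(q) = q·N_q(x/a) + (1-q)·D_q(x/a)`. -/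
noncomputable def Jq (x a : ℕ) : Polynomial ℤ := X * Nq x a + (1 - X) * Dq x a

/-! ### Auxiliary machinery for the proof -/

section Aux

/-- Unfolding lemma: `W 1 b = qInt (b+1)`. -/
lemma W_one_left (b : ℕ) : W 1 b = qInt (b + 1) := by
  rcases b with _ | _ | b <;>
    (delta W; rw [W._unary.eq_1]) <;> with_unfolding_all rfl

/-- Unfolding lemma: `W (a+2) 1 = qInt (a+3)`. -/
lemma W_two_one (a : ℕ) : W (a + 2) 1 = qInt (a + 3) := by
  delta W; rw [W._unary.eq_1]

lemma W_one_right (a : ℕ) (ha : 1 ≤ a) : W a 1 = qInt (a + 1) := by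
  rcases a with _ | _ | a
  · omega
  · exact W_one_left 1
  · exact W_two_one a

/-- Unfolding lemma for the recursive case. -/
lemma W_succ_succ (a b : ℕ) : W (a + 2) (b + 2) =
    (if a < b then
      W (a + 2 - (b + 2) % (a + 2)) ((b + 2) % (a + 2)) + X * W (a + 2) (b - a)
    else
      W (a - b) (b + 2) +
        X ^ ((a + 2 + (b + 2) - 1) / (b + 2)) *
          W ((a + 2) % (b + 2)) (b + 2 - (a + 2) % (b + 2))) := by
  conv_lhs => delta W; rw [W._unary.eq_1]
  with_unfolding_all rfl

lemma W_lt {a b : ℕ} (ha : 2 ≤ a) (hb : 2 ≤ b) (hab : a < b) :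
    W a b = W (a - b % a) (b % a) + X * W a (b - a) := by
  obtain ⟨a', rfl⟩ : ∃ a', a = a' + 2 := ⟨a - 2, by omega⟩
  obtain ⟨b', rfl⟩ : ∃ b', b = b' + 2 := ⟨b - 2, by omega⟩
  rw [W_succ_succ, if_pos (by omega : a' < b')]
  have h1 : b' - a' = b' + 2 - (a' + 2) := by omega
  rw [h1]

lemma W_gt {a b : ℕ} (hb : 2 ≤ b) (hab : b < a) :
    W a b = W (a - b) b + X ^ ((a + b - 1) / b) * W (a % b) (b - a % b) := by
  obtain ⟨a', rfl⟩ : ∃ a', a = a' + 2 := ⟨a - 2, by omega⟩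
  obtain ⟨b', rfl⟩ : ∃ b', b = b' + 2 := ⟨b - 2, by omega⟩
  rw [W_succ_succ, if_neg (by omega : ¬ a' < b')]
  have h1 : a' - b' = a' + 2 - (b' + 2) := by omega
  rw [h1]

/-- The degree of `W a b` (for coprime positive `a`, `b`). -/
def dW : ℕ → ℕ → ℕ
  | a, b =>
    if h1 : a ≤ 1 then b
    else if h2 : b ≤ 1 then a
    else if h3 : a < b then 1 + dW a (b - a) else 1 + dW (a - b) b
  termination_by a b => a + b
  decreasing_by all_goals omega

lemma dW_one_left (b : ℕ) : dW 1 b = b := by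
  rw [dW]; simp

lemma dW_one_right (a : ℕ) (ha : 1 ≤ a) : dW a 1 = a := by
  rw [dW]; split_ifs <;> omega

lemma dW_lt {a b : ℕ} (ha : 2 ≤ a) (hab : a < b) : dW a b = 1 + dW a (b - a) := by
  rw [dW, dif_neg (by omega : ¬ a ≤ 1), dif_neg (by omega : ¬ b ≤ 1), dif_pos hab]

lemma dW_gt {a b : ℕ} (hb : 2 ≤ b) (hab : b < a) : dW a b = 1 + dW (a - b) b := by
  rw [dW, dif_neg (by omega : ¬ a ≤ 1), dif_neg (by omega : ¬ b ≤ 1),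
    dif_neg (by omega : ¬ a < b)]

lemma dW_symm : ∀ n a b : ℕ, a + b ≤ n → 1 ≤ a → 1 ≤ b → dW a b = dW b a := by
  intro n
  induction n with
  | zero => intro a b h ha hb; omega
  | succ n IH =>
    intro a b hab ha hb
    rcases eq_or_lt_of_le ha with h1 | h1
    · rw [← h1, dW_one_left, dW_one_right b hb]
    rcases eq_or_lt_of_le hb with h2 | h2
    · rw [← h2, dW_one_left, dW_one_right a ha]
    rcases lt_trichotomy a b with h | h | h
    · rw [dW_lt (by omega) h, dW_gt (by omega) h, IH a (b - a) (by omega) ha (by omega)]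
    · rw [h]
    · rw [dW_lt (by omega) h, dW_gt (by omega) h, IH (a - b) b (by omega) (by omega) hb]

lemma coprime_mod {a b : ℕ} (ha : 2 ≤ a) (hco : Nat.Coprime a b) :
    1 ≤ b % a ∧ b % a < a ∧ Nat.Coprime (b % a) a := by
  have hco' : Nat.Coprime (b % a) a := by
    have := Nat.gcd_rec a b
    unfold Nat.Coprime at *
    omega
  refine ⟨?_, Nat.mod_lt _ (by omega), hco'⟩
  rcases Nat.eq_zero_or_pos (b % a) with h | h
  · rw [h, Nat.coprime_zero_left] at hco'; omega
  · exact h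

lemma dW_step : ∀ b a : ℕ, 2 ≤ a → a < b → Nat.Coprime a b →
    dW (a - b % a) (b % a) + (b + a - 1) / a = dW a b := by
  intro b
  induction b using Nat.strong_induction_on with
  | _ b IH =>
    intro a ha hab hco
    obtain ⟨hr1, hrlt, hcor⟩ := coprime_mod ha hco
    rcases lt_trichotomy (b - a) a with h1 | h1 | h1
    · -- `a < b < 2a`
      have hmod : b % a = b - a := by
        rw [Nat.mod_eq_sub_mod (by omega), Nat.mod_eq_of_lt h1]
      have hc : (b + a - 1) / a = 2 :=
        Nat.div_eq_of_lt_le (by omega) (by omega)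
      rw [hmod, hc, dW_lt ha hab]
      rcases eq_or_lt_of_le (show 1 ≤ b - a by omega) with h2 | h2
      · rw [← h2, dW_one_right a (by omega), dW_one_right (a - 1) (by omega)]
        omega
      · rw [dW_gt (by omega : 2 ≤ b - a) (by omega : b - a < a)]
        omega
    · -- `b = 2a`, impossible by coprimality
      exfalso
      have hz : b % a = 0 := by
        rw [Nat.mod_eq_sub_mod (by omega), show b - a = a from h1, Nat.mod_self]
      omega
    · -- `2a < b`
      have hmod : b % a = (b - a) % a := Nat.mod_eq_sub_mod (by omega)
      have hc : (b + a - 1) / a = ((b - a) + a - 1) / a + 1 := by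
        have h : b + a - 1 = ((b - a) + a - 1) + a := by omega
        rw [h, Nat.add_div_right _ (by omega)]
      have IH' := IH (b - a) (by omega) a ha (by omega)
        ((Nat.coprime_sub_self_right (by omega)).mpr hco)
      rw [dW_lt ha hab, hmod, hc]
      omega

lemma qInt_coeff (n i : ℕ) : (qInt n).coeff i = if i < n then 1 else 0 := by
  rw [qInt, finset_sum_coeff]
  simp only [coeff_X_pow]
  rw [Finset.sum_ite_eq (Finset.range n) i (fun _ => (1 : ℤ))]
  simp [Finset.mem_range]

lemma qInt_natDegree_le (n : ℕ) : (qInt (n + 1)).natDegree ≤ n := by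
  rw [natDegree_le_iff_coeff_eq_zero]
  intro N hN
  rw [qInt_coeff, if_neg (by omega)]

lemma qInt_reflect (n : ℕ) : reflect n (qInt (n + 1)) = qInt (n + 1) := by
  ext i
  rw [coeff_reflect]
  rcases le_or_gt i n with h | h
  · rw [revAt_le h, qInt_coeff, qInt_coeff, if_pos (by omega), if_pos (by omega)]
  · rw [revAt_eq_self_of_lt h]

lemma reflect_shift {N c : ℕ} {p : Polynomial ℤ} (h : p.natDegree ≤ N) :
    reflect (N + c) p = reflect N p * X ^ c := by
  have h2 := reflect_mul p (1 : Polynomial ℤ) h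
    (by simp : (1 : Polynomial ℤ).natDegree ≤ c)
  rw [mul_one, reflect_one] at h2
  exact h2

/-- The main induction: degree bound, coefficient positivity, and the
palindromicity statement, proved simultaneously. -/
lemma W_key : ∀ n a b : ℕ, a + b ≤ n → Nat.Coprime a b → 1 ≤ a → 1 ≤ b →
    (W a b).natDegree ≤ dW a b ∧ (∀ i, 0 ≤ (W a b).coeff i) ∧
      0 < (W a b).coeff (dW a b) ∧ W b a = reflect (dW a b) (W a b) := by
  intro n
  induction n with
  | zero => intro a b h _ ha hb; omega
  | succ n IH =>
    intro a b hab hco ha hb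
    rcases eq_or_lt_of_le ha with h1 | h1
    · -- `a = 1`
      rw [← h1, W_one_left b, W_one_right b hb, dW_one_left]
      obtain ⟨b', rfl⟩ : ∃ b', b = b' + 1 := ⟨b - 1, by omega⟩
      exact ⟨qInt_natDegree_le _, fun i => by rw [qInt_coeff]; split_ifs <;> norm_num,
        by rw [qInt_coeff, if_pos (by omega)]; norm_num, (qInt_reflect _).symm⟩
    rcases eq_or_lt_of_le hb with h2 | h2
    · -- `b = 1`
      rw [← h2, W_one_left a, W_one_right a ha, dW_one_right a ha]
      obtain ⟨a', rfl⟩ : ∃ a', a = a' + 1 := ⟨a - 1, by omega⟩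
      exact ⟨qInt_natDegree_le _, fun i => by rw [qInt_coeff]; split_ifs <;> norm_num,
        by rw [qInt_coeff, if_pos (by omega)]; norm_num, (qInt_reflect _).symm⟩
    rcases lt_trichotomy a b with h | h | h
    · -- `2 ≤ a < b`
      set r := b % a with hr
      obtain ⟨hr1, hrlt, hcor⟩ := coprime_mod (by omega) hco
      have hco1 : Nat.Coprime (a - r) r :=
        (Nat.coprime_sub_self_left (by omega)).mpr hcor.symm
      have hco2 : Nat.Coprime a (b - a) :=
        (Nat.coprime_sub_self_right (by omega)).mpr hco
      have IH1 := IH (a - r) r (by omega) hco1 (by omega) hr1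
      have IH2 := IH a (b - a) (by omega) hco2 ha (by omega)
      have hd : dW a b = 1 + dW a (b - a) := dW_lt (by omega) h
      have hstep : dW (a - r) r + (b + a - 1) / a = dW a b :=
        dW_step b a (by omega) h hco
      have hW : W a b = W (a - r) r + X * W a (b - a) := W_lt (by omega) (by omega) h
      refine ⟨?_, ?_, ?_, ?_⟩
      · rw [hW]
        refine le_trans (natDegree_add_le _ _)
          (max_le (le_trans IH1.1 (by rw [← hstep]; exact Nat.le_add_right _ _)) ?_)
        refine le_trans natDegree_mul_le ?_
        have := natDegree_X_le (R := ℤ)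
        omega
      · intro i
        rw [hW, coeff_add]
        refine add_nonneg (IH1.2.1 i) ?_
        rcases i with _ | i
        · rw [mul_coeff_zero, coeff_X_zero, zero_mul]
        · rw [coeff_X_mul]; exact IH2.2.1 i
      · rw [hW, coeff_add]
        refine add_pos_of_nonneg_of_pos (IH1.2.1 _) ?_
        rw [hd, Nat.add_comm 1, coeff_X_mul]
        exact IH2.2.2.1
      · rw [hW, reflect_add]
        have e2 : reflect (dW a b) (X * W a (b - a)) = W (b - a) a := by
          rw [hd, reflect_mul X _ natDegree_X_le IH2.1, reflect_one_X, one_mul]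
          exact IH2.2.2.2.symm
        have e1 : reflect (dW a b) (W (a - r) r) = W r (a - r) * X ^ ((b + a - 1) / a) := by
          rw [← hstep, reflect_shift IH1.1, IH1.2.2.2]
        rw [e1, e2, W_gt (by omega : 2 ≤ a) h, ← hr]
        ring
    · -- `a = b ≥ 2`, impossible
      exfalso
      have : Nat.gcd a a = a := Nat.gcd_self a
      rw [← h] at hco
      unfold Nat.Coprime at hco
      omega
    · -- `2 ≤ b < a`
      set r := a % b with hr
      obtain ⟨hr1, hrlt, hcor⟩ := coprime_mod (by omega) hco.symm
      have hco1' : Nat.Coprime r (b - r) :=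
        (Nat.coprime_sub_self_right (by omega)).mpr hcor
      have hco2 : Nat.Coprime (a - b) b :=
        (Nat.coprime_sub_self_left (by omega)).mpr hco
      have IH1 := IH r (b - r) (by omega) hco1' hr1 (by omega)
      have IH2 := IH (a - b) b (by omega) hco2 (by omega) hb
      have hd : dW a b = 1 + dW (a - b) b := dW_gt (by omega) h
      have hstep : dW r (b - r) + (a + b - 1) / b = dW a b := by
        have hs := dW_step a b (by omega) h hco.symm
        rw [dW_symm (a + b) b a (by omega) hb ha] at hs
        rw [dW_symm b (b - r) r (by omega) (by omega) hr1] at hs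
        exact hs
      have hW : W a b = W (a - b) b + X ^ ((a + b - 1) / b) * W r (b - r) :=
        W_gt (by omega) h
      refine ⟨?_, ?_, ?_, ?_⟩
      · rw [hW]
        refine le_trans (natDegree_add_le _ _) (max_le (le_trans IH2.1 (by omega)) ?_)
        refine le_trans natDegree_mul_le ?_
        rw [← hstep, Nat.add_comm (dW r (b - r))]
        exact Nat.add_le_add (natDegree_X_pow_le _) IH1.1
      · intro i
        rw [hW, coeff_add, X_pow_mul, coeff_mul_X_pow']
        refine add_nonneg (IH2.2.1 i) ?_
        split_ifs with hh
        · exact IH1.2.1 _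
        · exact le_refl _
      · rw [hW, coeff_add]
        refine add_pos_of_nonneg_of_pos (IH2.2.1 _) ?_
        rw [X_pow_mul, ← hstep, coeff_mul_X_pow]
        exact IH1.2.2.1
      · rw [hW, reflect_add]
        have e2 : reflect (dW a b) (W (a - b) b) = W b (a - b) * X := by
          rw [hd, Nat.add_comm 1, reflect_shift IH2.1, IH2.2.2.2, pow_one]
        have e1 : reflect (dW a b) (X ^ ((a + b - 1) / b) * W r (b - r)) = W (b - r) r := by
          rw [← hstep, Nat.add_comm (dW r (b - r)),
            reflect_mul _ _ (natDegree_X_pow_le _) IH1.1, reflect_monomial,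
            revAt_le (le_refl _), Nat.sub_self, pow_zero, one_mul]
          exact IH1.2.2.2.symm
        rw [e1, e2, W_lt (by omega : 2 ≤ b) (by omega : 2 ≤ a) h, ← hr]
        ring

end Aux


/-- For coprime `1 ≤ a ≤ x`, the polynomial `(x, a)_q` is the reversal
`q^{deg (x,a)_q}·(a,x)_{q⁻¹}` of `(a, x)_q`. -/
theorem W_reverse (a x : ℕ) (hco : Nat.Coprime a x) (ha : 1 ≤ a) (hax : a ≤ x) :
    W x a = (W a x).reverse := by
  have key := W_key (a + x) a x le_rfl hco ha (le_trans ha hax)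
  have hdeg : (W a x).natDegree = dW a x :=
    le_antisymm key.1 (le_natDegree_of_ne_zero (by have := key.2.2.1; intro hc; rw [hc] at this; exact lt_irrefl 0 this))
  rw [Polynomial.reverse, hdeg]
  exact key.2.2.2
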